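/- arXiv:2302.08203 — 2 statements merged into one kernel-verified Lean document; each statement's English description precedes it below -/
import Mathlib

section
/- With notation as above (Z = U Λ Uᵀ symmetric positive definite, w = U^H e ≠ 0, r_loss > 0), the gain G = P_rad/(P_rad + P_loss) = (∑ |w_i|²/λ_i) / (∑ |w_i|²/λ_i + ∑ r_loss |w_i|²/λ_i²) satisfies G ≤ λ_max/(λ_max + r_loss) where λ_max is the largest eigenvalue of Z; moreover G → 0 along any sequence of matrices Z for which min_i λ_i → 0 while the component |w_{i*}|² on a vanishing eigenvalue stays bounded below by a positive constant and the other terms stay bounded. -/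
open Filter Finset

/-- With `Z = U Λ Uᵀ` symmetric positive definite, `w = U^H e ≠ 0`, `r_loss > 0`,
the gain `G = P_rad/(P_rad + P_loss)` (with `P_rad = ∑ |w_i|²/λ_i`,
`P_loss = ∑ r|w_i|²/λ_i²`) satisfies `G ≤ λ_max/(λ_max + r)`, where `λ_max` is
the largest eigenvalue; moreover `G → 0` along any sequence for which the
eigenvalue at an index `i₀` tends to `0` while the power component `|w_{i₀}|²`
stays bounded below by `c > 0` and the remaining radiated-power terms stay
bounded by `B`. -/
theorem stmt10 {M : ℕ} (r : ℝ) (hr : 0 < r)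
    -- fixed data for the upper bound
    (lam : Fin M → ℝ) (hlam : ∀ i, 0 < lam i)
    (w : Fin M → ℂ) (hw : w ≠ 0)
    (lmax : ℝ) (hmax1 : ∃ i, lam i = lmax) (hmax2 : ∀ i, lam i ≤ lmax)
    -- sequence data for the limit
    (i₀ : Fin M) (Lam : ℕ → Fin M → ℝ) (W : ℕ → Fin M → ℂ)
    (hLam : ∀ n i, 0 < Lam n i)
    (hLam0 : Tendsto (fun n => Lam n i₀) atTop (nhds 0))
    (c : ℝ) (hc : 0 < c) (hWlo : ∀ n, c ≤ Complex.normSq (W n i₀))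
    (B : ℝ)
    (hB : ∀ n, ∑ i ∈ Finset.univ.erase i₀, Complex.normSq (W n i) / Lam n i ≤ B) :
    (∑ i, Complex.normSq (w i) / lam i) /
        ((∑ i, Complex.normSq (w i) / lam i)
          + ∑ i, r * Complex.normSq (w i) / (lam i) ^ 2)
      ≤ lmax / (lmax + r) ∧
    Tendsto (fun n =>
        (∑ i, Complex.normSq (W n i) / Lam n i) /
          ((∑ i, Complex.normSq (W n i) / Lam n i)
            + ∑ i, r * Complex.normSq (W n i) / (Lam n i) ^ 2))
      atTop (nhds 0) := by
  obtain ⟨j, hj⟩ := hmax1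
  have hlmax : 0 < lmax := hj ▸ hlam j
  constructor
  · -- upper bound
    set P := ∑ i, Complex.normSq (w i) / lam i with hP
    set Q := ∑ i, r * Complex.normSq (w i) / (lam i) ^ 2 with hQ
    obtain ⟨k, hk⟩ : ∃ k, w k ≠ 0 := by
      by_contra h
      push_neg at h
      exact hw (funext fun k => h k)
    have hPpos : 0 < P := by
      apply Finset.sum_pos'
        (fun i _ => div_nonneg (Complex.normSq_nonneg _) (hlam i).le)
      exact ⟨k, Finset.mem_univ k,
        div_pos (Complex.normSq_pos.2 hk) (hlam k)⟩
    have hQge : (r / lmax) * P ≤ Q := by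
      rw [hP, hQ, Finset.mul_sum]
      apply Finset.sum_le_sum
      intro i _
      have h1 : 0 < lam i := hlam i
      have h2 : lam i ≤ lmax := hmax2 i
      have h3 : 0 ≤ Complex.normSq (w i) := Complex.normSq_nonneg _
      have hrr : r / lmax ≤ r / lam i := div_le_div_of_nonneg_left hr.le h1 h2
      calc r / lmax * (Complex.normSq (w i) / lam i)
          ≤ r / lam i * (Complex.normSq (w i) / lam i) :=
            mul_le_mul_of_nonneg_right hrr (div_nonneg h3 h1.le)
        _ = r * Complex.normSq (w i) / lam i ^ 2 := by
            rw [div_mul_div_comm, ← sq]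
    have key : r * P ≤ lmax * Q := by
      have h := mul_le_mul_of_nonneg_left hQge hlmax.le
      rwa [show lmax * (r / lmax * P) = r * P by field_simp] at h
    have hQnonneg : 0 ≤ Q := le_trans (by positivity) hQge
    rw [div_le_div_iff₀ (by positivity) (by positivity)]
    nlinarith
  · -- limit
    have hBnn : 0 ≤ B := le_trans (Finset.sum_nonneg fun i _ =>
      div_nonneg (Complex.normSq_nonneg _) (hLam 0 i).le) (hB 0)
    apply squeeze_zero (g := fun n => B * (Lam n i₀)^2 / (r*c) + Lam n i₀ / r)
    · intro n
      have h1 : (0:ℝ) ≤ ∑ i, Complex.normSq (W n i) / Lam n i :=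
        Finset.sum_nonneg fun i _ => div_nonneg (Complex.normSq_nonneg _) (hLam n i).le
      have h2 : (0:ℝ) ≤ ∑ i, r * Complex.normSq (W n i) / (Lam n i) ^ 2 :=
        Finset.sum_nonneg fun i _ =>
          div_nonneg (mul_nonneg hr.le (Complex.normSq_nonneg _)) (sq_nonneg _)
      exact div_nonneg h1 (add_nonneg h1 h2)
    · intro n
      set L := Lam n i₀ with hLdef
      set s := Complex.normSq (W n i₀) with hsdef
      have hL : 0 < L := hLam n i₀
      have hs : c ≤ s := hWlo n
      have hspos : 0 < s := lt_of_lt_of_le hc hs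
      set P := ∑ i, Complex.normSq (W n i) / Lam n i with hP
      set Q := ∑ i, r * Complex.normSq (W n i) / (Lam n i) ^ 2 with hQ
      have hPnn : 0 ≤ P := Finset.sum_nonneg fun i _ =>
        div_nonneg (Complex.normSq_nonneg _) (hLam n i).le
      have hQnn : 0 ≤ Q := Finset.sum_nonneg fun i _ =>
        div_nonneg (mul_nonneg hr.le (Complex.normSq_nonneg _)) (sq_nonneg _)
      have hQge : r * s / L ^ 2 ≤ Q := by
        rw [hQ]
        exact Finset.single_le_sum (f := fun i => r * Complex.normSq (W n i) / (Lam n i) ^ 2)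
          (fun i _ => div_nonneg (mul_nonneg hr.le (Complex.normSq_nonneg _)) (sq_nonneg _))
          (Finset.mem_univ i₀)
      have hQpos : 0 < Q := lt_of_lt_of_le (by positivity) hQge
      have hPle : P ≤ s / L + B := by
        rw [hP, ← Finset.add_sum_erase _ _ (Finset.mem_univ i₀)]
        exact add_le_add (le_refl _) (hB n)
      calc P / (P + Q) ≤ P / Q := by
            apply div_le_div_of_nonneg_left hPnn hQpos
            linarith
        _ ≤ (s / L + B) / (r * s / L ^ 2) := by
            apply div_le_div₀ (by positivity) hPle (by positivity) hQge
        _ = L / r + B * L ^ 2 / (r * s) := by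
            field_simp
        _ ≤ B * L ^ 2 / (r * c) + L / r := by
            have : B * L ^ 2 / (r * s) ≤ B * L ^ 2 / (r * c) := by
              apply div_le_div_of_nonneg_left (by positivity) (by positivity)
              nlinarith
            linarith
    · have h1 : Tendsto (fun n => B * (Lam n i₀)^2 / (r*c) + Lam n i₀ / r) atTop
          (nhds (B * 0^2 / (r*c) + 0 / r)) :=
        (((hLam0.pow 2).const_mul B).div_const (r*c)).add (hLam0.div_const r)
      simpa using h1
end

section
/- For M isotropic antennas (g ≡ 1) with vanishing spacing, the limiting maximal directivity satisfies lim_{d→0⁺} e^H Z(d)⁻¹ e can exceed M: specifically, for M = 2 isotropic elements along the endfire direction, lim_{d→0⁺} max directivity e^H Z⁻¹ e = 4 = M², where Z(d) = [[1, sinc(kd)],[sinc(kd), 1]] and e(d) = [1, e^{j k d}]ᵀ (endfire steering). -/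
open Matrix Filter Real

lemma sinc_lim : Tendsto (fun x : ℝ => Real.sin x / x) (nhdsWithin 0 (Set.Ioi 0)) (nhds 1) := by
  have h := (Real.hasDerivAt_sin 0)
  rw [hasDerivAt_iff_tendsto_slope] at h
  have h2 : Tendsto (fun x : ℝ => Real.sin x / x) (nhdsWithin 0 {(0:ℝ)}ᶜ) (nhds 1) := by
    have he : (fun x : ℝ => Real.sin x / x) = slope Real.sin 0 := by
      funext x; simp [slope_fun_def, Real.sin_zero]; ring
    rw [he]; simpa [Real.cos_zero] using h
  exact h2.mono_left (nhdsWithin_mono _ (fun x hx => ne_of_gt hx))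

lemma G_lim : Tendsto (fun θ : ℝ => Real.sin θ * (1 - Real.cos θ) / (θ - Real.sin θ))
    (nhdsWithin 0 (Set.Ioi 0)) (nhds 3) := by
  apply HasDerivAt.lhopital_zero_nhdsGT
    (f' := fun θ => Real.cos θ * (1 - Real.cos θ) + Real.sin θ * Real.sin θ)
    (g' := fun θ => 1 - Real.cos θ)
  · filter_upwards with θ
    have := ((Real.hasDerivAt_sin θ).mul ((hasDerivAt_const θ 1).sub (Real.hasDerivAt_cos θ)))
    exact this.congr_deriv (by simp only [Pi.sub_apply]; ring)
  · filter_upwards with θ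
    exact (hasDerivAt_id θ).sub (Real.hasDerivAt_sin θ)
  · filter_upwards [Ioo_mem_nhdsGT_of_mem (Set.mem_Ico.mpr ⟨le_refl 0, Real.pi_pos⟩)] with θ hθ
    have : Real.cos θ < 1 := by
      calc Real.cos θ < Real.cos 0 := Real.cos_lt_cos_of_nonneg_of_le_pi (le_refl 0) hθ.2.le hθ.1
        _ = 1 := Real.cos_zero
    linarith
  · have : Tendsto (fun θ : ℝ => Real.sin θ * (1 - Real.cos θ)) (nhds 0) (nhds 0) := by
      have := ((Real.continuous_sin.mul ((continuous_const (y := (1:ℝ))).sub Real.continuous_cos)).tendsto 0)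
      simp at this; exact this
    exact this.mono_left nhdsWithin_le_nhds
  · have : Tendsto (fun θ : ℝ => θ - Real.sin θ) (nhds 0) (nhds 0) := by
      have := (continuous_id.sub Real.continuous_sin).tendsto 0
      simp at this; exact this
    exact this.mono_left nhdsWithin_le_nhds
  · have hev : ∀ᶠ θ in nhdsWithin 0 (Set.Ioi (0:ℝ)),
        (Real.cos θ * (1 - Real.cos θ) + Real.sin θ * Real.sin θ) / (1 - Real.cos θ)
          = 1 + 2 * Real.cos θ := by
      filter_upwards [Ioo_mem_nhdsGT_of_mem (Set.mem_Ico.mpr ⟨le_refl 0, Real.pi_pos⟩)] with θ hθ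
      have hc : Real.cos θ < 1 := by
        calc Real.cos θ < Real.cos 0 := Real.cos_lt_cos_of_nonneg_of_le_pi (le_refl 0) hθ.2.le hθ.1
          _ = 1 := Real.cos_zero
      have hne : 1 - Real.cos θ ≠ 0 := by linarith
      have hs : Real.sin θ * Real.sin θ = (1 - Real.cos θ) * (1 + Real.cos θ) := by
        have := Real.sin_sq_add_cos_sq θ
        nlinarith [this]
      field_simp [hs]
      linear_combination Real.sin_sq_add_cos_sq θ
    rw [tendsto_congr' hev]
    have : Tendsto (fun θ : ℝ => 1 + 2 * Real.cos θ) (nhds 0) (nhds 3) := by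
      have hc : Continuous (fun θ : ℝ => 1 + 2 * Real.cos θ) := by continuity
      have := hc.tendsto 0
      norm_num at this
      convert this using 2

    exact this.mono_left nhdsWithin_le_nhds

lemma F_lim : Tendsto (fun θ : ℝ =>
    (2 - 2 * (Real.sin θ / θ) * Real.cos θ) / (1 - (Real.sin θ / θ)^2))
    (nhdsWithin 0 (Set.Ioi 0)) (nhds 4) := by
  have hA : Tendsto (fun θ : ℝ => 2 / (1 + Real.sin θ / θ)) (nhdsWithin 0 (Set.Ioi 0)) (nhds 1) := by
    have h2 : Tendsto (fun θ : ℝ => 1 + Real.sin θ / θ) (nhdsWithin 0 (Set.Ioi 0)) (nhds 2) := by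
      have := tendsto_const_nhds (x := (1:ℝ)) (f := nhdsWithin (0:ℝ) (Set.Ioi 0))
      have := this.add sinc_lim
      norm_num at this; exact this
    have := (tendsto_const_nhds (x := (2:ℝ)) (f := nhdsWithin (0:ℝ) (Set.Ioi 0))).div h2 (by norm_num)
    norm_num at this; exact this
  have hB : Tendsto (fun θ : ℝ => 1 + Real.sin θ * (1 - Real.cos θ) / (θ - Real.sin θ))
      (nhdsWithin 0 (Set.Ioi 0)) (nhds 4) := by
    have := (tendsto_const_nhds (x := (1:ℝ)) (f := nhdsWithin (0:ℝ) (Set.Ioi 0))).add G_lim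
    norm_num at this; exact this
  have hprod := hA.mul hB
  norm_num at hprod
  refine hprod.congr' ?_
  filter_upwards [Ioo_mem_nhdsGT_of_mem (Set.mem_Ico.mpr ⟨le_refl 0, Real.pi_pos⟩)] with θ hθ
  have hθ0 : (0:ℝ) < θ := hθ.1
  have hs_pos : 0 < Real.sin θ := Real.sin_pos_of_pos_of_lt_pi hθ0 hθ.2
  have hs_lt : Real.sin θ < θ := Real.sin_lt hθ0
  have h1 : θ - Real.sin θ ≠ 0 := by linarith
  have h2 : θ + Real.sin θ ≠ 0 := by linarith
  have h3 : θ ≠ 0 := ne_of_gt hθ0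
  have h5 : 1 - (Real.sin θ / θ)^2 ≠ 0 := by
    have : (Real.sin θ / θ)^2 < 1 := by
      rw [sq_lt_one_iff_abs_lt_one, abs_div, abs_of_pos hθ0, div_lt_one hθ0, abs_of_pos hs_pos]
      exact hs_lt
    linarith
  have h6 : 1 + Real.sin θ / θ ≠ 0 := by positivity
  symm
  rw [div_eq_iff h5, div_mul_eq_mul_div, div_mul_eq_mul_div, eq_div_iff h6]
  field_simp
  ring
lemma key_eq (k d : ℝ) (hθ : k * d ∈ Set.Ioo 0 Real.pi) :
    star (![1, Complex.exp (Complex.I * k * d)]) ⬝ᵥ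
          ((Matrix.of ![![(1 : ℂ), ((Real.sin (k * d) / (k * d) : ℝ) : ℂ)],
              ![((Real.sin (k * d) / (k * d) : ℝ) : ℂ), 1]])⁻¹ *ᵥ
            ![1, Complex.exp (Complex.I * k * d)])
    = (((2 - 2 * (Real.sin (k*d) / (k*d)) * Real.cos (k*d)) / (1 - (Real.sin (k*d) / (k*d))^2) : ℝ) : ℂ) := by
  set θ := k * d with hθdef
  have hθ0 : 0 < θ := hθ.1
  have hs_pos : 0 < Real.sin θ := Real.sin_pos_of_pos_of_lt_pi hθ0 hθ.2
  have hs_lt : Real.sin θ < θ := Real.sin_lt hθ0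
  set s : ℝ := Real.sin θ / θ with hs
  have hs1 : s < 1 := by rw [hs, div_lt_one hθ0]; exact hs_lt
  have hs0 : 0 < s := div_pos hs_pos hθ0
  have hdet_ne : (1 : ℝ) - s^2 ≠ 0 := by nlinarith
  have hZ : (Matrix.of ![![(1 : ℂ), (s : ℂ)], ![(s : ℂ), 1]]) = !![(1:ℂ), (s:ℂ); (s:ℂ), 1] := rfl
  rw [hZ]
  have hdet : (!![(1:ℂ), (s:ℂ); (s:ℂ), 1]).det = 1 - (s:ℂ)^2 := by
    simp [Matrix.det_fin_two_of]; ring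
  have hdetC : ((1:ℂ) - (s:ℂ)^2) ≠ 0 := by
    exact_mod_cast Complex.ofReal_ne_zero.mpr hdet_ne
  rw [Matrix.inv_def, hdet, Matrix.adjugate_fin_two]
  have hE : Complex.exp (Complex.I * k * d) = Real.cos θ + Real.sin θ * Complex.I := by
    have : Complex.I * k * d = (θ : ℂ) * Complex.I := by push_cast [hθdef]; ring
    rw [this, Complex.exp_mul_I]
    push_cast
    ring
  simp only [Matrix.smul_mulVec, Matrix.mulVec, dotProduct, Fin.sum_univ_two,
    Matrix.cons_val', Matrix.cons_val_zero, Matrix.cons_val_one, Matrix.head_cons,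
    Matrix.head_fin_const, Matrix.empty_val', Matrix.cons_val_fin_one, Pi.smul_apply,
    Pi.star_apply, smul_eq_mul, Matrix.of_apply, hE]
  rw [Ring.inverse_eq_inv']
  simp only [star_add, star_mul', Complex.star_def, Complex.conj_ofReal, Complex.conj_I, star_one]
  have hpy : (Real.cos θ : ℂ)^2 + (Real.sin θ : ℂ)^2 = 1 := by
    exact_mod_cast congrArg (fun x : ℝ => (x : ℂ)) (Real.cos_sq_add_sin_sq θ)
  simp only [Matrix.smul_apply, Matrix.cons_val_zero, Matrix.cons_val_one, Matrix.head_cons,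
    Matrix.head_fin_const, Matrix.cons_val', Matrix.empty_val', Matrix.cons_val_fin_one,
    smul_eq_mul, Matrix.of_apply]
  have hrhs : (((2 - 2 * s * Real.cos θ) / (1 - s^2) : ℝ) : ℂ)
      = (2 - 2 * (s:ℂ) * (Real.cos θ : ℂ)) / (1 - (s:ℂ)^2) := by
    push_cast [-Complex.ofReal_sin, -Complex.ofReal_cos]
    ring
  rw [hrhs]
  generalize hS : ((s:ℝ):ℂ) = S at hdetC ⊢
  generalize hC : ((Real.cos θ : ℝ):ℂ) = C at hpy ⊢
  generalize hSn : ((Real.sin θ : ℝ):ℂ) = Sn at hpy ⊢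
  field_simp
  linear_combination hpy - Sn^2 * Complex.I_sq

/-- Uzkov superdirectivity for `M = 2`: with
`Z(d) = [[1, sinc(kd)],[sinc(kd), 1]]` and endfire steering
`e(d) = [1, e^{jkd}]ᵀ`, the maximal directivity `e(d)^H Z(d)⁻¹ e(d)` tends to
`4 = M²` as the spacing `d → 0⁺`. -/
theorem stmt15 (k : ℝ) (hk : 0 < k) :
    Tendsto (fun d : ℝ =>
        star (![1, Complex.exp (Complex.I * k * d)]) ⬝ᵥ
          ((Matrix.of ![![(1 : ℂ), ((Real.sin (k * d) / (k * d) : ℝ) : ℂ)],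
              ![((Real.sin (k * d) / (k * d) : ℝ) : ℂ), 1]])⁻¹ *ᵥ
            ![1, Complex.exp (Complex.I * k * d)]))
      (nhdsWithin 0 (Set.Ioi 0)) (nhds 4) := by
  have hkd : Tendsto (fun d : ℝ => k * d) (nhdsWithin 0 (Set.Ioi 0))
      (nhdsWithin 0 (Set.Ioi 0)) := by
    rw [tendsto_nhdsWithin_iff]
    constructor
    · have h0 : Tendsto (fun d : ℝ => k * d) (nhds 0) (nhds (k * 0)) :=
        (continuous_const.mul continuous_id).tendsto 0
      rw [mul_zero] at h0
      exact h0.mono_left nhdsWithin_le_nhds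
    · filter_upwards [self_mem_nhdsWithin] with d hd
      exact mul_pos hk hd
  have hreal : Tendsto (fun d : ℝ =>
      (2 - 2 * (Real.sin (k*d) / (k*d)) * Real.cos (k*d)) / (1 - (Real.sin (k*d) / (k*d))^2))
      (nhdsWithin 0 (Set.Ioi 0)) (nhds 4) := F_lim.comp hkd
  have hC : Tendsto (fun d : ℝ =>
      (((2 - 2 * (Real.sin (k*d) / (k*d)) * Real.cos (k*d)) / (1 - (Real.sin (k*d) / (k*d))^2) : ℝ) : ℂ))
      (nhdsWithin 0 (Set.Ioi 0)) (nhds ((4:ℝ):ℂ)) :=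
    (Complex.continuous_ofReal.tendsto 4).comp hreal
  rw [show ((4:ℝ):ℂ) = 4 by norm_num] at hC
  refine Tendsto.congr' ?_ hC
  filter_upwards [Ioo_mem_nhdsGT_of_mem
    (Set.mem_Ico.mpr ⟨le_refl 0, div_pos Real.pi_pos hk⟩)] with d hd
  have hmem : k * d ∈ Set.Ioo 0 Real.pi := by
    constructor
    · exact mul_pos hk hd.1
    · calc k * d < k * (Real.pi / k) := by exact mul_lt_mul_of_pos_left hd.2 hk
        _ = Real.pi := by field_simp
  exact (key_eq k d hmem).symm
end
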